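/- (3,4) threshold scheme on the 4-cycle (Proposition 3): let C4 be the cycle graph on vertices {1,2,3,4}, and for S ∈ {0,1} let ℓ^S := (S,S,S,S). Then (a) for every subset V' ⊆ {1,2,3,4} with |V'| ≤ 2, the reduced states coincide: Tr_{V∖V'}(|G_{ℓ^0}⟩⟨G_{ℓ^0}|) = Tr_{V∖V'}(|G_{ℓ^1}⟩⟨G_{ℓ^1}|); and (b) for every subset V' with |V'| = 3 there exists j ∈ V' with N_j ⊆ V', and the stabilizer K_j = X_j·∏_{k∈N_j}Z_k acts trivially outside V' and satisfies K_j |G_{ℓ^S}⟩ = (−1)^S |G_{ℓ^S}⟩; hence any three players can determine S while any two players obtain no information about S. -/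

import Mathlib

noncomputable section

open scoped ComplexConjugate

/-- The Hilbert space of qubits indexed by `V`, as functions from bit strings to `ℂ`. -/
abbrev QState (V : Type) : Type := (V → Fin 2) → ℂ

/-- The diagonal operator with diagonal entries `d`. -/
def diagOp {V : Type} (d : (V → Fin 2) → ℂ) : QState V →ₗ[ℂ] QState V where
  toFun f := fun x => d x * f x
  map_add' f g := by funext x; simp [mul_add]
  map_smul' c f := by funext x; simp [smul_eq_mul]; ring

/-- The Pauli `Z` operator on qubit `i`. -/
def Zop {V : Type} (i : V) : QState V →ₗ[ℂ] QState V :=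
  diagOp fun x => (-1 : ℂ) ^ (x i : ℕ)

/-- The Pauli `X` operator on qubit `i` (bit flip). -/
def Xop {V : Type} [DecidableEq V] (i : V) : QState V →ₗ[ℂ] QState V where
  toFun f := fun x => f (Function.update x i (x i + 1))
  map_add' f g := rfl
  map_smul' c f := rfl

/-- The phase gate `S` on qubit `i`, sending `|x⟩` to `(-i)^(x i) |x⟩`. -/
def Sop {V : Type} (i : V) : QState V →ₗ[ℂ] QState V :=
  diagOp fun x => (-Complex.I) ^ (x i : ℕ)

/-- The Pauli `Y` operator on qubit `i`, `Y = i·X·Z`. -/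
def Yop {V : Type} [DecidableEq V] (i : V) : QState V →ₗ[ℂ] QState V :=
  Complex.I • (Xop i ∘ₗ Zop i)

/-- `qVal G x` is the number of edges of `G` both of whose endpoints carry bit 1 in `x`. -/
def qVal {V : Type} (G : SimpleGraph V) (x : V → Fin 2) : ℕ :=
  Nat.card {e : Sym2 V // e ∈ G.edgeSet ∧ ∀ v ∈ e, x v = 1}

/-- The graph state `|G⟩`, with amplitudes `2^{-n/2} (-1)^{q_G(x)}`. -/
def graphState {V : Type} [Fintype V] (G : SimpleGraph V) : QState V :=
  fun x => (((Real.sqrt 2)⁻¹ ^ Fintype.card V : ℝ) : ℂ) * (-1 : ℂ) ^ qVal G x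

/-- The labeled/encoded graph state `|𝒢_ℓ⟩ = (∏_i Z_i^{ℓ_i}) (∏_{j ∈ Vsq} S_j) |G⟩`,
with square-vertex set `Vsq`. -/
def encSq {V : Type} [Fintype V] (G : SimpleGraph V) (Vsq : Set V) (ℓ : V → Fin 2) : QState V :=
  fun x => (-1 : ℂ) ^ Nat.card {i : V // ℓ i = 1 ∧ x i = 1}
    * (-Complex.I) ^ Nat.card {j : V // j ∈ Vsq ∧ x j = 1}
    * graphState G x

/-- The encoded graph state `|G_ℓ⟩` (no square vertices). -/
def encG {V : Type} [Fintype V] (G : SimpleGraph V) (ℓ : V → Fin 2) : QState V :=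
  encSq G ∅ ℓ

open Classical in
/-- The stabilizer operator of vertex `i`: `X_i ∏_{j ∈ N_i} Z_j` for circular vertices,
`Y_i ∏_{j ∈ N_i} Z_j` for square vertices (`i ∈ Vsq`). -/
def Kop {V : Type} [DecidableEq V] (G : SimpleGraph V) (Vsq : Set V) (i : V) :
    QState V →ₗ[ℂ] QState V :=
  (if i ∈ Vsq then Yop i else Xop i) ∘ₗ
    diagOp fun x => (-1 : ℂ) ^ Nat.card {j : V // G.Adj i j ∧ x j = 1}

/-- Merge a bit string on `P` with a bit string on the complement of `P`. -/
def mergeBits {V : Type} [DecidableEq V] (P : Finset V) (a : {i // i ∈ P} → Fin 2)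
    (c : {i // i ∉ P} → Fin 2) : V → Fin 2 :=
  fun i => if h : i ∈ P then a ⟨i, h⟩ else c ⟨i, h⟩

/-- The reduced density matrix of the pure state `ψ` on the qubits in `P`:
`(a, b) ↦ ∑_c ⟨a⊔c|ψ⟩⟨ψ|b⊔c⟩`. -/
def red {V : Type} [Fintype V] [DecidableEq V] (P : Finset V) (ψ : QState V) :
    ({i // i ∈ P} → Fin 2) → ({i // i ∈ P} → Fin 2) → ℂ :=
  fun a b => ∑ c : {i // i ∉ P} → Fin 2, ψ (mergeBits P a c) * conj (ψ (mergeBits P b c))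

/-- The computational basis vector `|y⟩`. -/
def basisVec {V : Type} [Fintype V] [DecidableEq V] (y : V → Fin 2) : QState V :=
  fun x => if x = y then 1 else 0

/-- The matrix entry `⟨x|A|y⟩` of an operator. -/
def opEntry {V : Type} [Fintype V] [DecidableEq V] (A : QState V →ₗ[ℂ] QState V)
    (x y : V → Fin 2) : ℂ := A (basisVec y) x

/-- `A` acts trivially outside `P`: it equals `M ⊗ Id` for some operator `M` on the
qubits in `P`. -/
def trivialOutside {V : Type} [Fintype V] [DecidableEq V] (P : Finset V)
    (A : QState V →ₗ[ℂ] QState V) : Prop :=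
  ∃ M : ({i // i ∈ P} → Fin 2) → ({i // i ∈ P} → Fin 2) → ℂ,
    ∀ a b c c', opEntry A (mergeBits P a c) (mergeBits P b c') = if c = c' then M a b else 0

/-- The product `∏_{i ∈ T} K_i` of (commuting) operators, taken in sorted order. -/
def prodOps {V : Type} [LinearOrder V] (T : Finset V)
    (K : V → QState V →ₗ[ℂ] QState V) : QState V →ₗ[ℂ] QState V :=
  (T.sort (· ≤ ·)).foldr (fun i acc => K i ∘ₗ acc) LinearMap.id


/-- The cycle graph on `Fin n` (consecutive vertices mod `n` are adjacent). -/
def cycG (n : ℕ) [NeZero n] : SimpleGraph (Fin n) where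
  Adj a b := a ≠ b ∧ (b = a + 1 ∨ a = b + 1)
  symm := by refine ⟨?_⟩; intro a b h; exact ⟨h.1.symm, h.2.symm⟩
  loopless := by refine ⟨?_⟩; intro a h; exact h.1 rfl


section Aux

instance cycAdjDec : DecidableRel (cycG 4).Adj :=
  fun a b => decidable_of_iff (a ≠ b ∧ (b = a + 1 ∨ a = b + 1)) Iff.rfl

instance sym2AllDec (x : Fin 4 → Fin 2) (e : Sym2 (Fin 4)) :
    Decidable (∀ v ∈ e, x v = 1) :=
  e.recOnSubsingleton fun p q =>
    decidable_of_iff (x p = 1 ∧ x q = 1) (by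
      constructor
      · rintro ⟨h1, h2⟩ v hv
        rcases Sym2.mem_iff.mp hv with rfl | rfl <;> assumption
      · intro h
        exact ⟨h p (Sym2.mem_mk_left _ _), h q (Sym2.mem_mk_right _ _)⟩)

/-- computable weight -/
def wtc (x : Fin 4 → Fin 2) : ℕ :=
  (if x 0 = 1 then 1 else 0) + (if x 1 = 1 then 1 else 0)
    + (if x 2 = 1 then 1 else 0) + (if x 3 = 1 then 1 else 0)

/-- computable qVal for the 4-cycle -/
def qc (x : Fin 4 → Fin 2) : ℕ :=
  (if x 0 = 1 ∧ x 1 = 1 then 1 else 0) + (if x 1 = 1 ∧ x 2 = 1 then 1 else 0)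
    + (if x 2 = 1 ∧ x 3 = 1 then 1 else 0) + (if x 3 = 1 ∧ x 0 = 1 then 1 else 0)

/-- computable neighbour-weight -/
def nbc (j : Fin 4) (x : Fin 4 → Fin 2) : ℕ :=
  (Finset.univ.filter fun k => (cycG 4).Adj j k ∧ x k = 1).card

lemma qVal_eq (x : Fin 4 → Fin 2) : qVal (cycG 4) x = qc x := by
  unfold qVal
  rw [Nat.card_eq_fintype_card]
  revert x; decide

lemma ncard_eq (j : Fin 4) (x : Fin 4 → Fin 2) :
    Nat.card {k : Fin 4 // (cycG 4).Adj j k ∧ x k = 1} = nbc j x := by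
  rw [Nat.card_eq_fintype_card]
  revert j x; decide

lemma card_label (S : Fin 2) (x : Fin 4 → Fin 2) :
    Nat.card {i : Fin 4 // (fun _ : Fin 4 => S) i = 1 ∧ x i = 1} = S.val * wtc x := by
  rw [Nat.card_eq_fintype_card]
  revert S x; decide

lemma card_empty_set (x : Fin 4 → Fin 2) :
    Nat.card {j : Fin 4 // j ∈ (∅ : Set (Fin 4)) ∧ x j = 1} = 0 := by
  have : IsEmpty {j : Fin 4 // j ∈ (∅ : Set (Fin 4)) ∧ x j = 1} :=
    ⟨fun ⟨_, hj, _⟩ => hj⟩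
  exact Nat.card_of_isEmpty

lemma enc_eq (S : Fin 2) (x : Fin 4 → Fin 2) :
    encG (cycG 4) (fun _ => S) x
      = (((Real.sqrt 2)⁻¹ ^ 4 : ℝ) : ℂ)
        * (((-1 : ℤ) ^ (S.val * wtc x + qc x) : ℤ) : ℂ) := by
  unfold encG encSq graphState
  rw [card_label, card_empty_set, qVal_eq, Fintype.card_fin]
  push_cast
  ring

/-- integer phase of the encoded state -/
def ez (S : ℕ) (y : Fin 4 → Fin 2) : ℤ := (-1) ^ (S * wtc y + qc y)

lemma partA_int : ∀ P : Finset (Fin 4), P.card ≤ 2 →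
    ∀ a b : ({i // i ∈ P} → Fin 2),
    (∑ c : {i // i ∉ P} → Fin 2, ez 0 (mergeBits P a c) * ez 0 (mergeBits P b c))
      = ∑ c : {i // i ∉ P} → Fin 2, ez 1 (mergeBits P a c) * ez 1 (mergeBits P b c) := by
  decide

lemma eig_int : ∀ (j : Fin 4) (S : Fin 2) (x : Fin 4 → Fin 2),
    ((-1 : ℤ) ^ nbc j (Function.update x j (x j + 1)))
        * ez S.val (Function.update x j (x j + 1))
      = (-1 : ℤ) ^ S.val * ez S.val x := by
  decide

lemma partB_j : ∀ P : Finset (Fin 4), P.card = 3 →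
    ∃ j ∈ P, ∀ k, (cycG 4).Adj j k → k ∈ P := by
  decide

lemma trivKop {V : Type} [Fintype V] [DecidableEq V] (G : SimpleGraph V) (P : Finset V)
    (j : V) (hj : j ∈ P) (hN : ∀ k, G.Adj j k → k ∈ P) :
    trivialOutside P (Kop G ∅ j) := by
  classical
  refine ⟨fun a b =>
    ((-1 : ℂ) ^ Nat.card {k : V // G.Adj j k ∧ mergeBits P a (fun _ => 0) k = 1}) *
      (if b = Function.update a ⟨j, hj⟩ (a ⟨j, hj⟩ + 1) then 1 else 0), ?_⟩
  intro a b c c'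
  have hKop : opEntry (Kop G ∅ j) (mergeBits P a c) (mergeBits P b c')
      = ((-1 : ℂ) ^ Nat.card {k : V // G.Adj j k ∧
            (Function.update (mergeBits P a c) j (mergeBits P a c j + 1)) k = 1})
        * (if Function.update (mergeBits P a c) j (mergeBits P a c j + 1) = mergeBits P b c'
            then 1 else 0) := by
    unfold opEntry Kop
    rw [if_neg (Set.notMem_empty j)]
    rfl
  have hup : ∀ k, G.Adj j k →
      Function.update (mergeBits P a c) j (mergeBits P a c j + 1) k
        = mergeBits P a (fun _ => (0 : Fin 2)) k := by
    intro k hk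
    have hkP : k ∈ P := hN k hk
    have hkj : k ≠ j := fun h => G.irrefl (h ▸ hk)
    rw [Function.update_of_ne hkj]
    simp [mergeBits, hkP]
  have hcard : Nat.card {k : V // G.Adj j k ∧
        (Function.update (mergeBits P a c) j (mergeBits P a c j + 1)) k = 1}
      = Nat.card {k : V // G.Adj j k ∧ mergeBits P a (fun _ => 0) k = 1} :=
    Nat.card_congr (Equiv.subtypeEquivRight fun k =>
      and_congr_right fun h => by rw [hup k h])
  have hiff : Function.update (mergeBits P a c) j (mergeBits P a c j + 1) = mergeBits P b c'
      ↔ (c = c' ∧ b = Function.update a ⟨j, hj⟩ (a ⟨j, hj⟩ + 1)) := by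
    constructor
    · intro h
      constructor
      · funext i
        have hij : (i : V) ≠ j := fun hh => i.2 (hh ▸ hj)
        have hi := congrFun h (i : V)
        rw [Function.update_of_ne hij] at hi
        simpa [mergeBits, i.2] using hi
      · funext i
        by_cases hij : (i : V) = j
        · have hsub : i = (⟨j, hj⟩ : {i // i ∈ P}) := Subtype.ext hij
          rw [hsub, Function.update_self]
          have hi := congrFun h j
          rw [Function.update_self] at hi
          simpa [mergeBits, hj] using hi.symm
        · have hsub : i ≠ (⟨j, hj⟩ : {i // i ∈ P}) :=
            fun hh => hij (congrArg Subtype.val hh)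
          rw [Function.update_of_ne hsub]
          have hi := congrFun h (i : V)
          rw [Function.update_of_ne hij] at hi
          have hiP : (i : V) ∈ P := i.2
          simp only [mergeBits, dif_pos hiP] at hi
          simpa using hi.symm
    · rintro ⟨rfl, rfl⟩
      funext i
      by_cases hiP : i ∈ P
      · by_cases hij : i = j
        · subst hij
          rw [Function.update_self]
          simp [mergeBits, hiP]
        · rw [Function.update_of_ne hij]
          have hsub : (⟨i, hiP⟩ : {i // i ∈ P}) ≠ ⟨j, hj⟩ :=
            fun hh => hij (congrArg Subtype.val hh)
          simp [mergeBits, hiP, Function.update_of_ne hsub]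
      · have hij : i ≠ j := fun hh => hiP (hh ▸ hj)
        rw [Function.update_of_ne hij]
        simp [mergeBits, hiP]
  rw [hKop, hcard]
  beta_reduce
  by_cases h1 : Function.update (mergeBits P a c) j (mergeBits P a c j + 1) = mergeBits P b c'
  · obtain ⟨hc, hb⟩ := hiff.mp h1
    rw [if_pos h1, if_pos hc, if_pos hb]
  · rw [if_neg h1]
    by_cases hc : c = c'
    · rw [if_pos hc, if_neg (fun hb => h1 (hiff.mpr ⟨hc, hb⟩))]
    · rw [if_neg hc]
      ring

lemma eig (j : Fin 4) (S : Fin 2) :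
    Kop (cycG 4) ∅ j (encG (cycG 4) fun _ => S)
      = ((-1 : ℂ) ^ (S : ℕ)) • encG (cycG 4) fun _ => S := by
  funext x
  have hK : Kop (cycG 4) ∅ j (encG (cycG 4) fun _ => S) x
      = ((-1 : ℂ) ^ Nat.card {k : Fin 4 // (cycG 4).Adj j k ∧
            (Function.update x j (x j + 1)) k = 1})
        * encG (cycG 4) (fun _ => S) (Function.update x j (x j + 1)) := by
    unfold Kop
    rw [if_neg (Set.notMem_empty j)]
    rfl
  rw [hK, ncard_eq, Pi.smul_apply, smul_eq_mul, enc_eq, enc_eq]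
  have h := eig_int j S x
  unfold ez at h
  have h2 : ((-1 : ℂ) ^ nbc j (Function.update x j (x j + 1)))
        * ((-1 : ℂ) ^ (S.val * wtc (Function.update x j (x j + 1))
            + qc (Function.update x j (x j + 1))))
      = (-1 : ℂ) ^ S.val * (-1 : ℂ) ^ (S.val * wtc x + qc x) := by
    exact_mod_cast congrArg (fun z : ℤ => (z : ℂ)) h
  push_cast
  linear_combination ((Real.sqrt 2 : ℂ))⁻¹ ^ 4 * h2

end Aux

/-- (3,4) threshold scheme on the 4-cycle: with `ℓ^S = (S,S,S,S)`,
(a) any set of at most two players has reduced states independent of `S`;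
(b) any set of three players contains a vertex `j` whose closed neighbourhood lies in
the set, and `K_j` acts trivially outside the set and has `|G_{ℓ^S}⟩` as an
eigenvector with eigenvalue `(−1)^S`; hence three players can determine `S` while two
obtain nothing. -/
theorem c4_34_threshold :
    (∀ P : Finset (Fin 4), P.card ≤ 2 →
      red P (encG (cycG 4) fun _ => (0 : Fin 2)) =
        red P (encG (cycG 4) fun _ => (1 : Fin 2))) ∧
    (∀ P : Finset (Fin 4), P.card = 3 →
      ∃ j ∈ P, (∀ k, (cycG 4).Adj j k → k ∈ P) ∧
        trivialOutside P (Kop (cycG 4) ∅ j) ∧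
        ∀ S : Fin 2,
          Kop (cycG 4) ∅ j (encG (cycG 4) fun _ => S) =
            ((-1 : ℂ) ^ (S : ℕ)) • encG (cycG 4) fun _ => S) := by
  constructor
  · intro P hP
    funext a b
    unfold red
    simp only [enc_eq, map_mul, Complex.conj_ofReal, map_intCast]
    have key : ∀ (z z' : ℤ) (r : ℝ),
        (r : ℂ) * (z : ℂ) * ((r : ℂ) * (z' : ℂ)) = (r : ℂ) ^ 2 * ((z * z' : ℤ) : ℂ) := by
      intros; push_cast; ring
    simp only [key]
    rw [← Finset.mul_sum, ← Finset.mul_sum]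
    congr 1
    rw [← Int.cast_sum, ← Int.cast_sum]
    exact congrArg _ (partA_int P hP a b)
  · intro P hP
    obtain ⟨j, hj, hN⟩ := partB_j P hP
    exact ⟨j, hj, hN, trivKop (cycG 4) P j hj hN, fun S => eig j S⟩

end
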